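/- Let K be a number field and let ε be a nonzero algebraic integer of K. Then ε = 1 if and only if for every ring homomorphism σ : K → ℂ there exists k_σ ∈ ℤ such that |log σ(ε) − k_σ·2πi| < log 2, where log denotes the principal branch of the complex logarithm. -/

import Mathlib

open Complex Nat in
lemma aux_abs_exp_sub_one_le (z : ℂ) :
    ‖Complex.exp z - 1‖ ≤ Real.exp ‖z‖ - 1 := by
  have hs : Summable fun n : ℕ => z ^ n / (n ! : ℂ) :=
    NormedSpace.expSeries_div_summable z
  have hs' : Summable fun n : ℕ => ‖z‖ ^ n / (n ! : ℝ) :=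
    NormedSpace.expSeries_div_summable ‖z‖
  have h1 : Complex.exp z = ∑' n : ℕ, z ^ n / n ! := by
    rw [Complex.exp_eq_exp_ℂ, NormedSpace.exp_eq_tsum_div]
  have h2 : Real.exp ‖z‖ = ∑' n : ℕ, ‖z‖ ^ n / n ! := by
    rw [Real.exp_eq_exp_ℝ, NormedSpace.exp_eq_tsum_div]
  rw [h1, hs.tsum_eq_zero_add, h2, hs'.tsum_eq_zero_add]
  simp only [pow_zero, Nat.factorial_zero, Nat.cast_one, div_one, add_sub_cancel_left]
  have habs : ∀ n : ℕ, ‖z ^ (n + 1) / ((n + 1)! : ℂ)‖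
      = ‖z‖ ^ (n + 1) / ((n + 1)! : ℝ) := by
    intro n
    simp [norm_div, norm_pow, Complex.norm_natCast]
  have hsn : Summable fun n : ℕ => ‖z ^ (n + 1) / ((n + 1)! : ℂ)‖ := by
    simp_rw [habs]
    exact (summable_nat_add_iff 1).mpr hs'
  calc ‖∑' n : ℕ, z ^ (n + 1) / ((n + 1)! : ℂ)‖
      ≤ ∑' n : ℕ, ‖z ^ (n + 1) / ((n + 1)! : ℂ)‖ := norm_tsum_le_tsum_norm hsn
    _ = ∑' n : ℕ, ‖z‖ ^ (n + 1) / ((n + 1)! : ℝ) := by simp_rw [habs]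

/-- Let `K` be a number field and `ε` a nonzero algebraic integer of `K`. Then `ε = 1`
iff for every ring homomorphism `σ : K → ℂ` there is `k_σ ∈ ℤ` with
`|log σ(ε) − k_σ·2πi| < log 2`, where `log` is the principal branch of the complex
logarithm. -/
theorem stmt_9 {K : Type*} [Field K] [NumberField K]
    (ε : K) (hε : ε ∈ integralClosure ℤ K) (hε0 : ε ≠ 0) :
    ε = 1 ↔ ∀ σ : K →+* ℂ, ∃ k : ℤ,
      ‖Complex.log (σ ε) - (k : ℂ) * (2 * Real.pi * Complex.I)‖ < Real.log 2 := by
  constructor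
  · rintro rfl σ
    refine ⟨0, ?_⟩
    simp [Complex.log_one, Real.log_pos one_lt_two]
  · intro h
    have key : ∀ σ : K →+* ℂ, ‖σ ε - 1‖ < 1 := by
      intro σ
      obtain ⟨k, hk⟩ := h σ
      set z := Complex.log (σ ε) - (k : ℂ) * (2 * Real.pi * Complex.I) with hz
      have hσε : σ ε ≠ 0 := fun h0 => hε0 (σ.injective (by simpa using h0))
      have hez : Complex.exp z = σ ε := by
        rw [hz, Complex.exp_sub, Complex.exp_log hσε,
          Complex.exp_int_mul_two_pi_mul_I, div_one]
      calc ‖σ ε - 1‖ = ‖Complex.exp z - 1‖ := by rw [hez]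
        _ ≤ Real.exp ‖z‖ - 1 := aux_abs_exp_sub_one_le z
        _ < Real.exp (Real.log 2) - 1 := by have := Real.exp_lt_exp.mpr hk; linarith
        _ = 1 := by rw [Real.exp_log (by norm_num : (0:ℝ) < 2)]; norm_num
    have hmem : ε - 1 ∈ integralClosure ℤ K := sub_mem hε (one_mem _)
    set a : NumberField.RingOfIntegers K := ⟨ε - 1, hmem⟩ with ha
    by_contra hne
    have ha0 : a ≠ 0 := by
      intro h0
      apply hne
      have : (a : K) = 0 := by rw [h0]; rfl
      have : ε - 1 = 0 := this
      linear_combination this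
    have hall : ∀ w : NumberField.InfinitePlace K, w (a : K) < 1 := by
      intro w
      rw [← NumberField.InfinitePlace.norm_embedding_eq]
      have : (a : K) = ε - 1 := rfl
      rw [this]
      simpa [map_sub] using key w.embedding
    exact absurd (NumberField.InfinitePlace.one_le_of_lt_one ha0
      (fun z _ => hall z)) (not_le.2 (hall (Classical.arbitrary _)))
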